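/- arXiv:2404.04865 — 2 statements merged into one kernel-verified Lean document; each statement's English description precedes it below -/
import Mathlib

section
/- Given a hypothesis space H and a domain D_XY, OOD detection is learnable under risk in the single-distribution space 𝒟^{D_XY} := {D^α : α ∈ [0,1)} for H if and only if the linear condition under risk holds for D_XY, i.e., for every α ∈ [0,1): inf_{h∈H} R_D^α(h) = (1−α)·inf_{h∈H} R_D^in(h) + α·inf_{h∈H} R_D^out(h). -/
open MeasureTheory Filter Set
open scoped ENNReal NNReal

noncomputable section

namespace OODF

/-- A *domain*: a mixture `(1-π)·D_I + π·D_O` of an ID joint distribution `D_I` on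
`𝒳 × {1,…,K}` and an OOD joint distribution `D_O` on `𝒳 × {K+1}`, with class prior
`π ∈ [0,1)`.  Labels are encoded as naturals: ID labels are `{1,…,K}`, OOD label is `K+1`. -/
structure Domain (𝒳 : Type*) [MeasurableSpace 𝒳] (K : ℕ) where
  DI : Measure (𝒳 × ℕ)
  DO : Measure (𝒳 × ℕ)
  prior : ℝ
  probI : IsProbabilityMeasure DI
  probO : IsProbabilityMeasure DO
  suppI : DI {p | p.2 ∉ Set.Icc 1 K} = 0
  suppO : DO {p | p.2 ≠ K + 1} = 0
  prior_mem : prior ∈ Set.Ico (0 : ℝ) 1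

variable {𝒳 : Type*} [MeasurableSpace 𝒳] {K : ℕ}

namespace Domain

/-- the mixed joint distribution `D_XY = (1-π)·D_I + π·D_O` -/
def joint (D : Domain 𝒳 K) : Measure (𝒳 × ℕ) :=
  ENNReal.ofReal (1 - D.prior) • D.DI + ENNReal.ofReal D.prior • D.DO

/-- the marginal `D_{X_I}` of the ID joint distribution on the feature space -/
def margI (D : Domain 𝒳 K) : Measure 𝒳 := D.DI.map Prod.fst

/-- the marginal `D_{X_O}` of the OOD joint distribution on the feature space -/
def margO (D : Domain 𝒳 K) : Measure 𝒳 := D.DO.map Prod.fst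

/-- the domain `D^α = (1-α)·D_I + α·D_O`, i.e. `D` with its class prior replaced by `α` -/
def withPrior (D : Domain 𝒳 K) (α : Set.Ico (0 : ℝ) 1) : Domain 𝒳 K :=
  { D with prior := α.1, prior_mem := α.2 }

end Domain

/-- a prior-unknown domain space: closed under changing the class prior -/
def PriorUnknown (𝒟 : Set (Domain 𝒳 K)) : Prop :=
  ∀ D ∈ 𝒟, ∀ α : Set.Ico (0 : ℝ) 1, D.withPrior α ∈ 𝒟

/-- the risk `R_D(h)` w.r.t. the mixed joint distribution -/
def risk (ℓ : ℕ → ℕ → ℝ) (D : Domain 𝒳 K) (h : 𝒳 → ℕ) : ℝ :=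
  ∫ p, ℓ (h p.1) p.2 ∂D.joint

/-- the ID risk `R_D^in(h)` -/
def riskIn (ℓ : ℕ → ℕ → ℝ) (D : Domain 𝒳 K) (h : 𝒳 → ℕ) : ℝ :=
  ∫ p, ℓ (h p.1) p.2 ∂D.DI

/-- the OOD risk `R_D^out(h)` -/
def riskOut (ℓ : ℕ → ℕ → ℝ) (D : Domain 𝒳 K) (h : 𝒳 → ℕ) : ℝ :=
  ∫ p, ℓ (h p.1) (K + 1) ∂D.DO

/-- the `α`-risk `R_D^α(h) = (1-α)·R_D^in(h) + α·R_D^out(h)` -/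
def riskA (ℓ : ℕ → ℕ → ℝ) (D : Domain 𝒳 K) (h : 𝒳 → ℕ) (α : ℝ) : ℝ :=
  (1 - α) * riskIn ℓ D h + α * riskOut ℓ D h

/-- the distribution of an i.i.d. sample of size `n` from the ID joint distribution -/
def sampleMeasure (D : Domain 𝒳 K) (n : ℕ) : Measure (Fin n → 𝒳 × ℕ) :=
  letI := D.probI
  Measure.pi fun _ => D.DI

/-- An algorithm maps, for every sample size `n ≥ 1`, a labeled sample to a function on `𝒳`. -/
abbrev Algorithm (𝒳 β : Type*) := (n : ℕ) → (Fin n → 𝒳 × ℕ) → (𝒳 → β)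

/-- `A` is consistent w.r.t. `𝒟` under risk with rate `ε`: it outputs hypotheses in `H`,
the resulting risks are measurable in the sample, and the expected excess risk for samples
of size `n ≥ 1` is at most `ε n`. -/
def ConsistentRisk (ℓ : ℕ → ℕ → ℝ) (𝒟 : Set (Domain 𝒳 K)) (H : Set (𝒳 → ℕ))
    (A : Algorithm 𝒳 ℕ) (ε : ℕ → ℝ) : Prop :=
  (∀ n : ℕ, 1 ≤ n → ∀ S, A n S ∈ H) ∧
  (∀ D ∈ 𝒟, ∀ n : ℕ, 1 ≤ n → Measurable fun S : Fin n → 𝒳 × ℕ => risk ℓ D (A n S)) ∧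
  ∀ D ∈ 𝒟, ∀ n : ℕ, 1 ≤ n →
    ∫ S, (risk ℓ D (A n S) - ⨅ h : H, risk ℓ D h.1) ∂(sampleMeasure D n) ≤ ε n

/-- OOD detection is learnable under risk in `𝒟` for `H` with the given rate. -/
def LearnableRiskRate (ℓ : ℕ → ℕ → ℝ) (𝒟 : Set (Domain 𝒳 K)) (H : Set (𝒳 → ℕ))
    (ε : ℕ → ℝ) : Prop :=
  ∃ A, ConsistentRisk ℓ 𝒟 H A ε

/-- learnability of OOD detection under risk -/
def LearnableRisk (ℓ : ℕ → ℕ → ℝ) (𝒟 : Set (Domain 𝒳 K)) (H : Set (𝒳 → ℕ)) : Prop :=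
  ∃ ε : ℕ → ℝ, Antitone ε ∧ Tendsto ε atTop (nhds 0) ∧ LearnableRiskRate ℓ 𝒟 H ε

/-- `A` is strongly consistent: the expected excess `α`-risks are uniformly small over
all `α ∈ [0,1]`. -/
def StrongConsistentRisk (ℓ : ℕ → ℕ → ℝ) (𝒟 : Set (Domain 𝒳 K)) (H : Set (𝒳 → ℕ))
    (A : Algorithm 𝒳 ℕ) (ε : ℕ → ℝ) : Prop :=
  (∀ n : ℕ, 1 ≤ n → ∀ S, A n S ∈ H) ∧
  (∀ D ∈ 𝒟, ∀ n : ℕ, 1 ≤ n → ∀ α : ℝ,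
    Measurable fun S : Fin n → 𝒳 × ℕ => riskA ℓ D (A n S) α) ∧
  ∀ D ∈ 𝒟, ∀ n : ℕ, 1 ≤ n → ∀ α ∈ Set.Icc (0 : ℝ) 1,
    ∫ S, (riskA ℓ D (A n S) α - ⨅ h : H, riskA ℓ D h.1 α) ∂(sampleMeasure D n) ≤ ε n

/-- strong learnability of OOD detection under risk -/
def StrongLearnableRisk (ℓ : ℕ → ℕ → ℝ) (𝒟 : Set (Domain 𝒳 K)) (H : Set (𝒳 → ℕ)) : Prop :=
  ∃ ε : ℕ → ℝ, Antitone ε ∧ Tendsto ε atTop (nhds 0) ∧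
    ∃ A, StrongConsistentRisk ℓ 𝒟 H A ε

/-- the AUC of a ranking function `r` w.r.t. ID marginal `P` and OOD marginal `Q`:
`AUC(r) = E_{x ~ P} E_{x' ~ Q} [1_{r(x) > r(x')} + (1/2)·1_{r(x) = r(x')}]` -/
def AUC (r : 𝒳 → ℝ) (P Q : Measure 𝒳) : ℝ :=
  ∫ x, (∫ x', ((if r x' < r x then (1 : ℝ) else 0) +
      (1 / 2) * (if r x = r x' then (1 : ℝ) else 0)) ∂Q) ∂P

/-- `A` is AUC-consistent w.r.t. `𝒟` with rate `ε`. -/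
def ConsistentAUC (𝒟 : Set (Domain 𝒳 K)) (R : Set (𝒳 → ℝ))
    (A : Algorithm 𝒳 ℝ) (ε : ℕ → ℝ) : Prop :=
  (∀ n : ℕ, 1 ≤ n → ∀ S, A n S ∈ R) ∧
  (∀ D ∈ 𝒟, ∀ n : ℕ, 1 ≤ n →
    Measurable fun S : Fin n → 𝒳 × ℕ => AUC (A n S) D.margI D.margO) ∧
  ∀ D ∈ 𝒟, ∀ n : ℕ, 1 ≤ n →
    ∫ S, ((⨆ r : R, AUC r.1 D.margI D.margO) - AUC (A n S) D.margI D.margO)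
      ∂(sampleMeasure D n) ≤ ε n

/-- OOD detection is learnable under AUC in `𝒟` for `R` with the given rate. -/
def LearnableAUCRate (𝒟 : Set (Domain 𝒳 K)) (R : Set (𝒳 → ℝ)) (ε : ℕ → ℝ) : Prop :=
  ∃ A, ConsistentAUC 𝒟 R A ε

/-- learnability of OOD detection under AUC -/
def LearnableAUC (𝒟 : Set (Domain 𝒳 K)) (R : Set (𝒳 → ℝ)) : Prop :=
  ∃ ε : ℕ → ℝ, Antitone ε ∧ Tendsto ε atTop (nhds 0) ∧ LearnableAUCRate 𝒟 R ε

/-- the (topological) support of a measure -/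
def mSupport {α : Type*} [TopologicalSpace α] [MeasurableSpace α] (μ : Measure α) : Set α :=
  {x | ∀ U ∈ nhds x, 0 < μ U}

/-- the separate space `𝒟^s`: all domains whose ID and OOD marginals have disjoint supports -/
def separateSpace (𝒳 : Type*) [MeasurableSpace 𝒳] [TopologicalSpace 𝒳] (K : ℕ) :
    Set (Domain 𝒳 K) :=
  {D | mSupport D.margO ∩ mSupport D.margI = ∅}

/-- a class `G` of binary functions (encoded as predicates) shatters the finite set `C` -/
def Shatters {α : Type*} (G : Set (α → Prop)) (C : Finset α) : Prop :=
  ∀ f : α → Prop, ∃ g ∈ G, ∀ x ∈ C, g x ↔ f x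

/-- the VC dimension of a class of binary functions (encoded as predicates) -/
def VCdim {α : Type*} (G : Set (α → Prop)) : ℕ∞ :=
  sSup {n : ℕ∞ | ∃ C : Finset α, Shatters G C ∧ n = (C.card : ℕ∞)}

section Helpers

variable {𝒳 : Type*} [MeasurableSpace 𝒳] {K : ℕ}

lemma meas_f {h : 𝒳 → ℕ} (hm : Measurable h) (ℓ : ℕ → ℕ → ℝ) :
    Measurable fun p : 𝒳 × ℕ => ℓ (h p.1) p.2 :=
  (measurable_of_countable fun q : ℕ × ℕ => ℓ q.1 q.2).comp
    ((hm.comp measurable_fst).prodMk measurable_snd)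

lemma ae_label_I (D : Domain 𝒳 K) : ∀ᵐ p ∂D.DI, p.2 ∈ Set.Icc 1 K := by
  rw [MeasureTheory.ae_iff]; exact D.suppI

lemma ae_label_O (D : Domain 𝒳 K) : ∀ᵐ p ∂D.DO, p.2 = K + 1 := by
  rw [MeasureTheory.ae_iff]; exact D.suppO

variable {ℓ : ℕ → ℕ → ℝ} {B : ℝ}
  (hl_nonneg : ∀ y₁ y₂, 0 ≤ ℓ y₁ y₂)
  (hB : ∀ y₁ ∈ Set.Icc 1 (K + 1), ∀ y₂ ∈ Set.Icc 1 (K + 1), ℓ y₁ y₂ ≤ B)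
  {h : 𝒳 → ℕ} (hm : Measurable h) (hr : ∀ x, h x ∈ Set.Icc 1 (K + 1))
  (D : Domain 𝒳 K)

include hl_nonneg hB hm hr in
lemma intI : Integrable (fun p : 𝒳 × ℕ => ℓ (h p.1) p.2) D.DI := by
  haveI := D.probI
  refine Integrable.mono' (integrable_const B) (meas_f hm ℓ).aestronglyMeasurable ?_
  filter_upwards [ae_label_I D] with p hp
  rw [Real.norm_eq_abs, abs_of_nonneg (hl_nonneg _ _)]
  exact hB _ (hr _) _ ⟨hp.1, le_trans hp.2 (Nat.le_succ K)⟩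

include hl_nonneg hB hm hr in
lemma intO : Integrable (fun p : 𝒳 × ℕ => ℓ (h p.1) p.2) D.DO := by
  haveI := D.probO
  refine Integrable.mono' (integrable_const B) (meas_f hm ℓ).aestronglyMeasurable ?_
  filter_upwards [ae_label_O D] with p hp
  rw [Real.norm_eq_abs, abs_of_nonneg (hl_nonneg _ _), hp]
  exact hB _ (hr _) _ ⟨Nat.succ_le_succ (Nat.zero_le K), le_refl _⟩

include hl_nonneg in
lemma riskIn_nonneg : 0 ≤ riskIn ℓ D h :=
  integral_nonneg fun p => hl_nonneg _ _

include hl_nonneg in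
lemma riskOut_nonneg : 0 ≤ riskOut ℓ D h :=
  integral_nonneg fun p => hl_nonneg _ _

include hl_nonneg hB hm hr in
lemma riskIn_le : riskIn ℓ D h ≤ B := by
  haveI := D.probI
  calc riskIn ℓ D h ≤ ∫ _p, B ∂D.DI := by
        refine integral_mono_ae (intI hl_nonneg hB hm hr D) (integrable_const B) ?_
        filter_upwards [ae_label_I D] with p hp
        exact hB _ (hr _) _ ⟨hp.1, le_trans hp.2 (Nat.le_succ K)⟩
    _ = B := by simp
include hl_nonneg hB hm hr in
lemma riskOut_le : riskOut ℓ D h ≤ B := by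
  haveI := D.probO
  calc riskOut ℓ D h ≤ ∫ _p, B ∂D.DO := by
        refine integral_mono_ae ?_ (integrable_const B) ?_
        · refine Integrable.mono' (integrable_const B) ?_ ?_
          · exact ((measurable_of_countable fun q : ℕ => ℓ q (K+1)).comp
              (hm.comp measurable_fst)).aestronglyMeasurable
          · refine Filter.Eventually.of_forall fun p => ?_
            rw [Real.norm_eq_abs, abs_of_nonneg (hl_nonneg _ _)]
            exact hB _ (hr _) _ ⟨Nat.succ_le_succ (Nat.zero_le K), le_refl _⟩
        · exact Filter.Eventually.of_forall fun p =>
            hB _ (hr _) _ ⟨Nat.succ_le_succ (Nat.zero_le K), le_refl _⟩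
    _ = B := by simp

include hl_nonneg hB hm hr in
lemma risk_eq_riskA (α : Set.Ico (0:ℝ) 1) :
    risk ℓ (D.withPrior α) h = riskA ℓ D h α.1 := by
  have hI := intI hl_nonneg hB hm hr D
  have hO := intO hl_nonneg hB hm hr D
  have h1 : (ENNReal.ofReal (1 - α.1)) ≠ ⊤ := ENNReal.ofReal_ne_top
  have h2 : (ENNReal.ofReal α.1) ≠ ⊤ := ENNReal.ofReal_ne_top
  rw [risk, Domain.joint, Domain.withPrior]
  rw [integral_add_measure (hI.smul_measure h1) (hO.smul_measure h2),
    integral_smul_measure, integral_smul_measure,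
    ENNReal.toReal_ofReal (by linarith [α.2.2] : (0:ℝ) ≤ 1 - α.1),
    ENNReal.toReal_ofReal α.2.1]
  have : ∫ p, ℓ (h p.1) p.2 ∂D.DO = ∫ p, ℓ (h p.1) (K+1) ∂D.DO := by
    refine integral_congr_ae ?_
    filter_upwards [ae_label_O D] with p hp
    rw [hp]
  rw [this]
  simp [riskA, riskIn, riskOut, smul_eq_mul]

lemma riskA_eq (α : ℝ) : riskA ℓ D h α = (1-α) * riskIn ℓ D h + α * riskOut ℓ D h := rfl

lemma sampleProb (D : Domain 𝒳 K) (n : ℕ) : IsProbabilityMeasure (sampleMeasure D n) := by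
  rw [sampleMeasure]
  haveI := D.probI
  infer_instance

end Helpers
set_option maxHeartbeats 1000000

/-- Theorem 3 of the paper.  For a single domain `D`, OOD detection is
learnable under risk in the single-distribution space `𝒟^{D} = {D^α : α ∈ [0,1)}` for `H`
iff the linear condition under risk holds:
`inf_{h∈H} R_D^α(h) = (1-α)·inf_{h∈H} R_D^in(h) + α·inf_{h∈H} R_D^out(h)` for all `α ∈ [0,1)`. -/
theorem stmt1 {d K : ℕ} (X : Set (EuclideanSpace ℝ (Fin d)))
    (ℓ : ℕ → ℕ → ℝ)
    (hl_nonneg : ∀ y₁ y₂, 0 ≤ ℓ y₁ y₂)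
    (hl_zero : ∀ y₁ ∈ Set.Icc 1 (K + 1), ∀ y₂ ∈ Set.Icc 1 (K + 1), (ℓ y₁ y₂ = 0 ↔ y₁ = y₂))
    (hl_bdd : ∃ B, ∀ y₁ ∈ Set.Icc 1 (K + 1), ∀ y₂ ∈ Set.Icc 1 (K + 1), ℓ y₁ y₂ ≤ B)
    (H : Set (↥X → ℕ)) (hHne : H.Nonempty)
    (hH : ∀ h ∈ H, Measurable h ∧ ∀ x, h x ∈ Set.Icc 1 (K + 1))
    (D : Domain ↥X K) :
    LearnableRisk ℓ {D' | ∃ α : Set.Ico (0 : ℝ) 1, D' = D.withPrior α} H ↔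
      ∀ α ∈ Set.Ico (0 : ℝ) 1,
        (⨅ h : H, riskA ℓ D h.1 α)
          = (1 - α) * (⨅ h : H, riskIn ℓ D h.1) + α * (⨅ h : H, riskOut ℓ D h.1) := by
  classical
  obtain ⟨B, hB⟩ := hl_bdd
  have h1mem : (1 : ℕ) ∈ Set.Icc 1 (K + 1) := ⟨le_refl 1, Nat.succ_le_succ (Nat.zero_le K)⟩
  have hBnn : 0 ≤ B := le_trans (hl_nonneg 1 1) (hB 1 h1mem 1 h1mem)
  haveI : Nonempty H := hHne.to_subtype
  set infIn := ⨅ h : H, riskIn ℓ D h.1 with hinfIn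
  set infOut := ⨅ h : H, riskOut ℓ D h.1 with hinfOut
  have bddIn : BddBelow (Set.range fun h : H => riskIn ℓ D h.1) :=
    ⟨0, by rintro _ ⟨h, rfl⟩; exact riskIn_nonneg hl_nonneg D⟩
  have bddOut : BddBelow (Set.range fun h : H => riskOut ℓ D h.1) :=
    ⟨0, by rintro _ ⟨h, rfl⟩; exact riskOut_nonneg hl_nonneg D⟩
  have bddA : ∀ β ∈ Set.Icc (0:ℝ) 1, BddBelow (Set.range fun h : H => riskA ℓ D h.1 β) := by
    intro β hβ
    refine ⟨0, ?_⟩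
    rintro _ ⟨h, rfl⟩
    show (0:ℝ) ≤ riskA ℓ D h.1 β
    rw [riskA_eq]
    exact add_nonneg (mul_nonneg (by linarith [hβ.2]) (riskIn_nonneg hl_nonneg D))
      (mul_nonneg hβ.1 (riskOut_nonneg hl_nonneg D))
  have hinfIn_nonneg : 0 ≤ infIn := le_ciInf fun h => riskIn_nonneg hl_nonneg D
  have hinfOut_nonneg : 0 ≤ infOut := le_ciInf fun h => riskOut_nonneg hl_nonneg D
  have hrew : ∀ (α : Set.Ico (0:ℝ) 1) (h : ↥X → ℕ), h ∈ H →
      risk ℓ (D.withPrior α) h = riskA ℓ D h α.1 :=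
    fun α h hh => risk_eq_riskA hl_nonneg hB (hH h hh).1 (hH h hh).2 D α
  have hinf_rew : ∀ α : Set.Ico (0:ℝ) 1,
      (⨅ h : H, risk ℓ (D.withPrior α) h.1) = ⨅ h : H, riskA ℓ D h.1 α.1 :=
    fun α => iInf_congr fun h => hrew α h.1 h.2
  constructor
  · rintro ⟨ε, hanti, htend, A, hmemH, hmeas, hcons⟩ α hα
    have hεnn : ∀ n, 0 ≤ ε n := fun n =>
      le_of_tendsto htend (Filter.eventually_atTop.2 ⟨n, fun m hm => hanti hm⟩)
    refine le_antisymm ?_ (le_ciInf fun h => ?_)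
    · have hrew' : ∀ (β : ℝ) (hβ : β ∈ Set.Ico (0:ℝ) 1) (h : ↥X → ℕ), h ∈ H →
          risk ℓ (D.withPrior ⟨β, hβ⟩) h = riskA ℓ D h β := fun β hβ => hrew ⟨β, hβ⟩
      have hinf_rew' : ∀ (β : ℝ) (hβ : β ∈ Set.Ico (0:ℝ) 1),
          (⨅ h : H, risk ℓ (D.withPrior ⟨β, hβ⟩) h.1) = ⨅ h : H, riskA ℓ D h.1 β :=
        fun β hβ => hinf_rew ⟨β, hβ⟩
      refine le_of_forall_pos_le_add fun δ hδ => ?_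
      set B₀ := max B 1 with hB₀
      have hB₀1 : (1:ℝ) ≤ B₀ := le_max_right B 1
      have hBB₀ : B ≤ B₀ := le_max_left B 1
      have hB₀pos : (0:ℝ) < B₀ := by linarith
      set m := min (δ/(8*B₀)) (1/2) with hm
      have hmpos : 0 < m := lt_min (by positivity) (by norm_num)
      have hm1 : m ≤ δ/(8*B₀) := min_le_left _ _
      have hm2 : m ≤ 1/2 := min_le_right _ _
      set α' : ℝ := 1 - m with hα'
      have hα'mem : α' ∈ Set.Ico (0:ℝ) 1 := ⟨by simp only [hα']; linarith, by simp only [hα']; linarith⟩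
      have hα'half : 1/2 ≤ α' := by simp only [hα']; linarith
      have hα'lt1 : α' < 1 := hα'mem.2
      have hlt : (⨅ h : H, riskOut ℓ D h.1) < infOut + δ/4 := by
        rw [← hinfOut]; linarith
      obtain ⟨h₀, hh₀⟩ := exists_lt_of_ciInf_lt hlt
      have hev : ∀ᶠ k in Filter.atTop, ε k < δ/12 :=
        htend.eventually (gt_mem_nhds (by linarith : (0:ℝ) < δ/12))
      obtain ⟨N, hN⟩ := Filter.eventually_atTop.1 hev
      set n := max N 1 with hn
      have hn1 : 1 ≤ n := le_max_right N 1
      have hεn : ε n < δ/12 := hN n (le_max_left N 1)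
      have hεnn' : 0 ≤ ε n := hεnn n
      haveI := sampleProb D n
      have hAH : ∀ S, A n S ∈ H := hmemH n hn1
      have hmeasA : ∀ (β : ℝ) (hβ : β ∈ Set.Ico (0:ℝ) 1),
          Measurable fun S : Fin n → ↥X × ℕ => riskA ℓ D (A n S) β := by
        intro β hβ
        have h1 := hmeas (D.withPrior ⟨β, hβ⟩) ⟨⟨β, hβ⟩, rfl⟩ n hn1
        have h2 : (fun S : Fin n → ↥X × ℕ => riskA ℓ D (A n S) β)
            = fun S => risk ℓ (D.withPrior ⟨β, hβ⟩) (A n S) :=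
          funext fun S => (hrew' β hβ _ (hAH S)).symm
        rw [h2]; exact h1
      set g₀ : (Fin n → ↥X × ℕ) → ℝ := fun S => riskIn ℓ D (A n S) with hg₀
      set g₁ : (Fin n → ↥X × ℕ) → ℝ := fun S => riskOut ℓ D (A n S) with hg₁
      have hmem0 : (0:ℝ) ∈ Set.Ico (0:ℝ) 1 := ⟨le_refl 0, one_pos⟩
      have hmemhalf : (1/2:ℝ) ∈ Set.Ico (0:ℝ) 1 := ⟨by norm_num, by norm_num⟩
      have hg₀eq : g₀ = fun S => riskA ℓ D (A n S) (0:ℝ) := by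
        funext S; simp [riskA, hg₀]
      have hg₁eq : g₁ = fun S => 2 * riskA ℓ D (A n S) (1/2) - riskA ℓ D (A n S) (0:ℝ) := by
        funext S; simp only [riskA, hg₁]; ring
      have hg₀m : Measurable g₀ := by rw [hg₀eq]; exact hmeasA 0 hmem0
      have hg₁m : Measurable g₁ := by
        rw [hg₁eq]
        exact ((hmeasA (1/2) hmemhalf).const_mul 2).sub (hmeasA 0 hmem0)
      have hg₀b : ∀ S, 0 ≤ g₀ S ∧ g₀ S ≤ B := fun S =>
        ⟨riskIn_nonneg hl_nonneg D, riskIn_le hl_nonneg hB (hH _ (hAH S)).1 (hH _ (hAH S)).2 D⟩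
      have hg₁b : ∀ S, 0 ≤ g₁ S ∧ g₁ S ≤ B := fun S =>
        ⟨riskOut_nonneg hl_nonneg D, riskOut_le hl_nonneg hB (hH _ (hAH S)).1 (hH _ (hAH S)).2 D⟩
      have hg₀int : Integrable g₀ (sampleMeasure D n) :=
        Integrable.mono' (integrable_const B) hg₀m.aestronglyMeasurable
          (Filter.Eventually.of_forall fun S => by
            rw [Real.norm_eq_abs, abs_of_nonneg (hg₀b S).1]; exact (hg₀b S).2)
      have hg₁int : Integrable g₁ (sampleMeasure D n) :=
        Integrable.mono' (integrable_const B) hg₁m.aestronglyMeasurable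
          (Filter.Eventually.of_forall fun S => by
            rw [Real.norm_eq_abs, abs_of_nonneg (hg₁b S).1]; exact (hg₁b S).2)
      set I := ∫ S, g₀ S ∂(sampleMeasure D n) with hIdef
      set O := ∫ S, g₁ S ∂(sampleMeasure D n) with hOdef
      have hInn : 0 ≤ I := integral_nonneg fun S => (hg₀b S).1
      have hOnn : 0 ≤ O := integral_nonneg fun S => (hg₁b S).1
      have hkey : ∀ (β : ℝ) (hβ : β ∈ Set.Ico (0:ℝ) 1),
          (1-β) * I + β * O ≤ (⨅ h : H, riskA ℓ D h.1 β) + ε n := by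
        intro β hβ
        have hc := hcons (D.withPrior ⟨β, hβ⟩) ⟨⟨β, hβ⟩, rfl⟩ n hn1
        have hsm : sampleMeasure (D.withPrior ⟨β, hβ⟩) n = sampleMeasure D n := rfl
        have hfun : (fun S => risk ℓ (D.withPrior ⟨β, hβ⟩) (A n S)
              - ⨅ h : H, risk ℓ (D.withPrior ⟨β, hβ⟩) h.1)
            = fun S => ((1-β) * g₀ S + β * g₁ S) - (⨅ h : H, riskA ℓ D h.1 β) := by
          funext S
          rw [hrew' β hβ _ (hAH S), hinf_rew' β hβ]
          rfl
        rw [hsm, hfun] at hc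
        have hint2 : Integrable (fun S => (1-β) * g₀ S + β * g₁ S) (sampleMeasure D n) :=
          (hg₀int.const_mul _).add (hg₁int.const_mul _)
        rw [integral_sub hint2 (integrable_const _),
          integral_add (hg₀int.const_mul _) (hg₁int.const_mul _),
          integral_const_mul, integral_const_mul, integral_const, probReal_univ,
          one_smul] at hc
        linarith
      have hIbd : I ≤ infIn + ε n := by
        have h0 := hkey 0 hmem0
        have he : (⨅ h : H, riskA ℓ D h.1 (0:ℝ)) = infIn := by
          rw [hinfIn]; exact iInf_congr fun h => by simp [riskA]
        rw [he] at h0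
        linarith
      have hObd : O ≤ infOut + δ/2 + 2 * ε n := by
        have hk := hkey α' hα'mem
        have hle : (⨅ h : H, riskA ℓ D h.1 α') ≤ (1-α') * B₀ + α' * (infOut + δ/4) := by
          refine le_trans (ciInf_le (bddA α' ⟨hα'mem.1, le_of_lt hα'mem.2⟩) h₀) ?_
          rw [riskA_eq]
          have hr1 : riskIn ℓ D h₀.1 ≤ B :=
            riskIn_le hl_nonneg hB (hH _ h₀.2).1 (hH _ h₀.2).2 D
          have h1a : (0:ℝ) ≤ 1 - α' := by linarith
          exact add_le_add (mul_le_mul_of_nonneg_left (le_trans hr1 hBB₀) h1a)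
            (mul_le_mul_of_nonneg_left (le_of_lt hh₀) (by linarith : (0:ℝ) ≤ α'))
        have hmain : α' * O ≤ (1-α') * B₀ + α' * infOut + α' * (δ/4) + ε n := by
          nlinarith [mul_nonneg (show (0:ℝ) ≤ 1-α' by linarith) hInn]
        have h1α'm : 1 - α' = m := by rw [hα']; ring
        have hmB : (1-α') * B₀ ≤ δ/8 := by
          rw [h1α'm]
          calc m * B₀ ≤ (δ/(8*B₀)) * B₀ := mul_le_mul_of_nonneg_right hm1 (le_of_lt hB₀pos)
            _ = δ/8 := by field_simp
        have hfin : α' * O ≤ α' * (infOut + δ/2 + 2*ε n) := by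
          nlinarith [mul_nonneg (show (0:ℝ) ≤ 2*α'-1 by linarith) hεnn',
            mul_nonneg (show (0:ℝ) ≤ α'-1/2 by linarith) (le_of_lt hδ)]
        exact le_of_mul_le_mul_left hfin (by linarith : (0:ℝ) < α')
      have hcomb : (⨅ h : H, riskA ℓ D h.1 α) ≤ (1-α) * I + α * O := by
        have hint : Integrable (fun S => (1-α) * g₀ S + α * g₁ S) (sampleMeasure D n) :=
          (hg₀int.const_mul _).add (hg₁int.const_mul _)
        have hpt : ∀ S, (⨅ h : H, riskA ℓ D h.1 α) ≤ (1-α) * g₀ S + α * g₁ S := fun S =>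
          ciInf_le (bddA α ⟨hα.1, le_of_lt hα.2⟩) ⟨A n S, hAH S⟩
        calc (⨅ h : H, riskA ℓ D h.1 α)
            = ∫ _S, (⨅ h : H, riskA ℓ D h.1 α) ∂(sampleMeasure D n) := by
              rw [integral_const, probReal_univ, one_smul]
          _ ≤ ∫ S, ((1-α) * g₀ S + α * g₁ S) ∂(sampleMeasure D n) :=
              integral_mono (integrable_const _) hint hpt
          _ = (1-α) * I + α * O := by
              rw [integral_add (hg₀int.const_mul _) (hg₁int.const_mul _),
                integral_const_mul, integral_const_mul]
      nlinarith [hcomb, hIbd, hObd, hεn, hεnn', hδ,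
        mul_nonneg (show (0:ℝ) ≤ 1-α by linarith [hα.2]) (show (0:ℝ) ≤ infIn + ε n - I by linarith),
        mul_nonneg hα.1 (show (0:ℝ) ≤ infOut + δ/2 + 2*ε n - O by linarith),
        mul_nonneg (show (0:ℝ) ≤ 1-α by linarith [hα.2]) hεnn',
        mul_nonneg (show (0:ℝ) ≤ 1-α by linarith [hα.2]) (le_of_lt hδ)]
    · have e1 : infIn ≤ riskIn ℓ D h.1 := ciInf_le bddIn h
      have e2 : infOut ≤ riskOut ℓ D h.1 := ciInf_le bddOut h
      rw [riskA_eq]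
      have hc1 : (0:ℝ) ≤ 1 - α := by linarith [hα.2]
      nlinarith [mul_nonneg hc1 (sub_nonneg.2 e1), mul_nonneg hα.1 (sub_nonneg.2 e2)]
  · intro hlin
    have hex : ∀ n : ℕ, ∃ h : H,
        riskIn ℓ D h.1 ≤ infIn + 1/(n+1) ∧ riskOut ℓ D h.1 ≤ infOut + 1/(n+1) := by
      intro n
      have ht : (0:ℝ) < 1/((n:ℝ)+1) := by positivity
      have h12 := hlin (1/2) ⟨by norm_num, by norm_num⟩
      have hlt : (⨅ h : H, riskA ℓ D h.1 (1/2))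
          < (1 - 1/2) * infIn + (1/2) * infOut + 1/(2*((n:ℝ)+1)) := by
        rw [h12]
        have : (0:ℝ) < 1/(2*((n:ℝ)+1)) := by positivity
        linarith
      obtain ⟨h, hh⟩ := exists_lt_of_ciInf_lt hlt
      have e1 : infIn ≤ riskIn ℓ D h.1 := ciInf_le bddIn h
      have e2 : infOut ≤ riskOut ℓ D h.1 := ciInf_le bddOut h
      rw [riskA_eq] at hh
      have hne : ((n:ℝ)+1) ≠ 0 := by positivity
      have hhalf : 1/(2*((n:ℝ)+1)) = (1/((n:ℝ)+1))/2 := by field_simp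
      rw [hhalf] at hh
      exact ⟨h, by linarith, by linarith⟩
    choose φ hφ1 hφ2 using hex
    refine ⟨fun n => 1/(n+1), ?_, tendsto_one_div_add_atTop_nhds_zero_nat, ?_⟩
    · intro a b hab
      apply one_div_le_one_div_of_le
      · positivity
      · have : (a:ℝ) ≤ b := Nat.cast_le.2 hab
        linarith
    · refine ⟨fun n _ => (φ n).1, fun n _ S => (φ n).2,
        fun D' _ n _ => measurable_const, ?_⟩
      rintro D' ⟨α, rfl⟩ n hn
      haveI := sampleProb (D.withPrior α) n
      have hconst : ∫ S, (risk ℓ (D.withPrior α) ((fun n (_ : Fin n → ↥X × ℕ) => (φ n).1) n S)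
            - ⨅ h : H, risk ℓ (D.withPrior α) h.1) ∂(sampleMeasure (D.withPrior α) n)
          = risk ℓ (D.withPrior α) (φ n).1 - ⨅ h : H, risk ℓ (D.withPrior α) h.1 := by
        simp
      rw [hconst, hrew α _ (φ n).2, hinf_rew α, hlin α.1 α.2, riskA_eq]
      have h1 := hφ1 n
      have h2 := hφ2 n
      have hc1 : (0:ℝ) ≤ 1 - α.1 := by linarith [α.2.2]
      have ht : (0:ℝ) ≤ 1/((n:ℝ)+1) := by positivity
      nlinarith [mul_nonneg hc1 (sub_nonneg.2 (by linarith : riskIn ℓ D (φ n).1 ≤ infIn + 1/((n:ℝ)+1))),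
        mul_nonneg α.2.1 (sub_nonneg.2 (by linarith : riskOut ℓ D (φ n).1 ≤ infOut + 1/((n:ℝ)+1)))]
end OODF
end
end

section
/- Let 𝒟 be a prior-unknown domain space and H a hypothesis space. If OOD detection is learnable under risk in 𝒟 for H, then both (i) the linear condition under risk holds: for every D_XY ∈ 𝒟 and every α ∈ [0,1), inf_{h∈H} R_D^α(h) = (1−α)·inf_{h∈H} R_D^in(h) + α·inf_{h∈H} R_D^out(h); and (ii) the multi-linear condition holds: for every OOD convex domain D_XY ∈ 𝒟 corresponding to an OOD convex decomposition Q₁,…,Q_l, the function f_{D,Q}(α₁,…,α_l) := inf_{h∈H} ((1−Σ_j α_j)·R_D^in(h) + Σ_j α_j·R_{Q_j}(h)), defined for (α₁,…,α_l) ∈ Δ_l^o, satisfies f_{D,Q}(α₁,…,α_l) = (1−Σ_j α_j)·f_{D,Q}(0) + Σ_j α_j·f_{D,Q}(e_j), where e_j is the vector whose j-th entry is 1 and all other entries are 0. -/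
open MeasureTheory Filter Set
open scoped ENNReal NNReal

noncomputable section

namespace OODF

variable {𝒳 : Type*} [MeasurableSpace 𝒳] {K : ℕ}

/-- `Q` is an OOD joint distribution: a probability measure on `𝒳 × {K+1}` -/
def IsOODDistr (K : ℕ) (Q : Measure (𝒳 × ℕ)) : Prop :=
  IsProbabilityMeasure Q ∧ Q {p | p.2 ≠ K + 1} = 0

/-- the risk `R_Q(h)` of `h` w.r.t. an OOD joint distribution `Q` -/
def riskQ (ℓ : ℕ → ℕ → ℝ) (K : ℕ) (Q : Measure (𝒳 × ℕ)) (h : 𝒳 → ℕ) : ℝ :=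
  ∫ p, ℓ (h p.1) (K + 1) ∂Q

/-- the open sub-simplex `Δ_l^o` -/
def simplexO (l : ℕ) : Set (Fin l → ℝ) :=
  {a | (∀ j, 0 ≤ a j) ∧ ∑ j, a j < 1}

/-- the function `f_{D,Q}` appearing in the multi-linear condition:
`f_{D,Q}(α₁,…,α_l) = inf_{h∈H} ((1-Σ_j α_j)·R_D^in(h) + Σ_j α_j·R_{Q_j}(h))` -/
def fDQ (ℓ : ℕ → ℕ → ℝ) (D : Domain 𝒳 K) (H : Set (𝒳 → ℕ)) {l : ℕ}
    (Q : Fin l → Measure (𝒳 × ℕ)) (a : Fin l → ℝ) : ℝ :=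
  ⨅ h : H, ((1 - ∑ j, a j) * riskIn ℓ D h.1 + ∑ j, a j * riskQ ℓ K (Q j) h.1)

section Helpers

variable {𝒳 : Type*} [MeasurableSpace 𝒳] {K : ℕ} {ℓ : ℕ → ℕ → ℝ} {B : ℝ}

lemma meas_lf {h : 𝒳 → ℕ} (hm : Measurable h) :
    Measurable fun p : 𝒳 × ℕ => ℓ (h p.1) p.2 := by
  have h1 : Measurable fun p : 𝒳 × ℕ => ((h p.1, p.2) : ℕ × ℕ) :=
    (hm.comp measurable_fst).prodMk measurable_snd
  exact (measurable_of_countable fun q : ℕ × ℕ => ℓ q.1 q.2).comp h1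

lemma meas_lf' {h : 𝒳 → ℕ} (hm : Measurable h) :
    Measurable fun p : 𝒳 × ℕ => ℓ (h p.1) (K + 1) :=
  (measurable_of_countable fun y : ℕ => ℓ y (K + 1)).comp (hm.comp measurable_fst)

lemma K1_mem : (K + 1) ∈ Set.Icc 1 (K + 1) := ⟨Nat.succ_le_succ (Nat.zero_le K), le_refl _⟩

/-- basic facts about `riskQ` for an OOD distribution -/
lemma riskQ_props (hl_nonneg : ∀ y₁ y₂, 0 ≤ ℓ y₁ y₂)
    (hB : ∀ y₁ ∈ Set.Icc 1 (K + 1), ∀ y₂ ∈ Set.Icc 1 (K + 1), ℓ y₁ y₂ ≤ B)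
    {Q : Measure (𝒳 × ℕ)} (hQ : IsOODDistr K Q)
    {h : 𝒳 → ℕ} (hm : Measurable h) (hr : ∀ x, h x ∈ Set.Icc 1 (K + 1)) :
    Integrable (fun p : 𝒳 × ℕ => ℓ (h p.1) p.2) Q ∧
    (∫ p, ℓ (h p.1) p.2 ∂Q) = riskQ ℓ K Q h ∧
    0 ≤ riskQ ℓ K Q h ∧ riskQ ℓ K Q h ≤ B := by
  haveI := hQ.1
  have hae : ∀ᵐ p ∂Q, p.2 = K + 1 := by
    rw [ae_iff]; exact hQ.2
  have hcong : (fun p : 𝒳 × ℕ => ℓ (h p.1) p.2) =ᵐ[Q] fun p => ℓ (h p.1) (K + 1) :=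
    hae.mono fun p hp => by simp only []; rw [hp]
  have hbd : ∀ p : 𝒳 × ℕ, ‖ℓ (h p.1) (K + 1)‖ ≤ B := fun p => by
    rw [Real.norm_eq_abs, abs_of_nonneg (hl_nonneg _ _)]
    exact hB _ (hr _) _ K1_mem
  have hint2 : Integrable (fun p : 𝒳 × ℕ => ℓ (h p.1) (K + 1)) Q :=
    (integrable_const B).mono' (meas_lf' hm).aestronglyMeasurable (Filter.Eventually.of_forall hbd)
  refine ⟨hint2.congr hcong.symm, integral_congr_ae hcong, integral_nonneg fun p => hl_nonneg _ _, ?_⟩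
  calc riskQ ℓ K Q h ≤ ∫ _p : 𝒳 × ℕ, B ∂Q := by
        refine integral_mono hint2 (integrable_const B) fun p => ?_
        exact le_trans (le_abs_self _) (hbd p)
    _ = B := by simp

/-- basic facts about `riskIn` -/
lemma riskIn_props (hl_nonneg : ∀ y₁ y₂, 0 ≤ ℓ y₁ y₂)
    (hB : ∀ y₁ ∈ Set.Icc 1 (K + 1), ∀ y₂ ∈ Set.Icc 1 (K + 1), ℓ y₁ y₂ ≤ B)
    (D : Domain 𝒳 K)
    {h : 𝒳 → ℕ} (hm : Measurable h) (hr : ∀ x, h x ∈ Set.Icc 1 (K + 1)) :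
    Integrable (fun p : 𝒳 × ℕ => ℓ (h p.1) p.2) D.DI ∧
    0 ≤ riskIn ℓ D h ∧ riskIn ℓ D h ≤ B := by
  haveI := D.probI
  have hae : ∀ᵐ p ∂D.DI, p.2 ∈ Set.Icc 1 K := by
    rw [ae_iff]; exact D.suppI
  have hbd : ∀ᵐ p ∂D.DI, ‖ℓ (h p.1) p.2‖ ≤ B := by
    refine hae.mono fun p hp => ?_
    rw [Real.norm_eq_abs, abs_of_nonneg (hl_nonneg _ _)]
    exact hB _ (hr _) _ ⟨hp.1, le_trans hp.2 (Nat.le_succ K)⟩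
  have hint : Integrable (fun p : 𝒳 × ℕ => ℓ (h p.1) p.2) D.DI :=
    (integrable_const B).mono' (meas_lf hm).aestronglyMeasurable hbd
  refine ⟨hint, integral_nonneg fun p => hl_nonneg _ _, ?_⟩
  calc riskIn ℓ D h ≤ ∫ _p : 𝒳 × ℕ, B ∂D.DI := by
        refine integral_mono_ae hint (integrable_const B) (hbd.mono fun p hp => ?_)
        exact le_trans (le_abs_self _) hp
    _ = B := by simp

/-- decomposition of the risk when the OOD part of the mixture decomposes as a sum -/
lemma risk_eq_sum (hl_nonneg : ∀ y₁ y₂, 0 ≤ ℓ y₁ y₂)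
    (hB : ∀ y₁ ∈ Set.Icc 1 (K + 1), ∀ y₂ ∈ Set.Icc 1 (K + 1), ℓ y₁ y₂ ≤ B)
    (D : Domain 𝒳 K) {l : ℕ} {Q : Fin l → Measure (𝒳 × ℕ)}
    (hQ : ∀ j, IsOODDistr K (Q j)) {a : Fin l → ℝ} (ha0 : ∀ j, 0 ≤ a j)
    (hsum : ENNReal.ofReal D.prior • D.DO = ∑ j, ENNReal.ofReal (a j) • Q j)
    {h : 𝒳 → ℕ} (hm : Measurable h) (hr : ∀ x, h x ∈ Set.Icc 1 (K + 1)) :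
    risk ℓ D h = (1 - D.prior) * riskIn ℓ D h + ∑ j, a j * riskQ ℓ K (Q j) h := by
  have hintI := (riskIn_props hl_nonneg hB D hm hr).1
  have hintO := (riskQ_props hl_nonneg hB ⟨D.probO, D.suppO⟩ hm hr).1
  have h1 : risk ℓ D h
      = ∫ p, ℓ (h p.1) p.2 ∂(ENNReal.ofReal (1 - D.prior) • D.DI)
        + ∫ p, ℓ (h p.1) p.2 ∂(ENNReal.ofReal D.prior • D.DO) := by
    unfold risk Domain.joint
    exact integral_add_measure (hintI.smul_measure ENNReal.ofReal_ne_top)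
      (hintO.smul_measure ENNReal.ofReal_ne_top)
  rw [h1, hsum, integral_smul_measure,
    ENNReal.toReal_ofReal (by linarith [D.prior_mem.2] : (0:ℝ) ≤ 1 - D.prior),
    integral_finset_sum_measure
      (fun j _ => ((riskQ_props hl_nonneg hB (hQ j) hm hr).1).smul_measure ENNReal.ofReal_ne_top)]
  rw [smul_eq_mul]
  congr 1
  refine Finset.sum_congr rfl fun j _ => ?_
  rw [integral_smul_measure, ENNReal.toReal_ofReal (ha0 j), smul_eq_mul,
    (riskQ_props hl_nonneg hB (hQ j) hm hr).2.1]

lemma sum_single_mul {l : ℕ} (j : Fin l) (β : ℝ) (c : Fin l → ℝ) :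
    ∑ k, (Pi.single j β : Fin l → ℝ) k * c k = β * c j := by
  rw [Finset.sum_eq_single j]
  · rw [Pi.single_eq_same]
  · intro k _ hk
    rw [Pi.single_eq_of_ne hk, zero_mul]
  · intro hj; exact absurd (Finset.mem_univ j) hj

lemma single_mem_simplexO {l : ℕ} (j : Fin l) {c : ℝ} (hc0 : 0 ≤ c) (hc1 : c < 1) :
    (Pi.single j c : Fin l → ℝ) ∈ simplexO l := by
  constructor
  · intro k
    rcases eq_or_ne k j with rfl | hk
    · rw [Pi.single_eq_same]; exact hc0
    · rw [Pi.single_eq_of_ne hk]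
  · rw [Finset.sum_pi_single']
    simpa using hc1

set_option maxHeartbeats 1000000 in
/-- the master lemma: learnability implies the multi-linear condition -/
lemma master (hl_nonneg : ∀ y₁ y₂, 0 ≤ ℓ y₁ y₂) (hB0 : 0 ≤ B)
    (hB : ∀ y₁ ∈ Set.Icc 1 (K + 1), ∀ y₂ ∈ Set.Icc 1 (K + 1), ℓ y₁ y₂ ≤ B)
    (H : Set (𝒳 → ℕ)) (hH : ∀ h ∈ H, Measurable h ∧ ∀ x, h x ∈ Set.Icc 1 (K + 1))
    (𝒟 : Set (Domain 𝒳 K)) (hLearn : LearnableRisk ℓ 𝒟 H)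
    {l : ℕ} (Q : Fin l → Measure (𝒳 × ℕ)) (hQ : ∀ j, IsOODDistr K (Q j))
    (D : Domain 𝒳 K)
    (hconv : ∀ a ∈ simplexO l, ∃ D' ∈ 𝒟, D'.DI = D.DI ∧ D'.prior = ∑ j, a j ∧
        ENNReal.ofReal D'.prior • D'.DO = ∑ j, ENNReal.ofReal (a j) • Q j)
    (a : Fin l → ℝ) (ha : a ∈ simplexO l) :
    fDQ ℓ D H Q a = (1 - ∑ j, a j) * fDQ ℓ D H Q 0
      + ∑ j, a j * fDQ ℓ D H Q (Pi.single j 1) := by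
  obtain ⟨ε, hmono, htend, A, hAH, hAmeas, hAbound⟩ := hLearn
  have hε0 : ∀ n, 0 ≤ ε n := fun n =>
    le_of_tendsto htend (Filter.eventually_atTop.2 ⟨n, fun m hm => hmono hm⟩)
  haveI hXne : Nonempty 𝒳 := by
    by_contra hne
    rw [not_nonempty_iff] at hne
    haveI := D.probI
    have h1 : D.DI Set.univ = 1 := measure_univ
    rw [Set.univ_eq_empty_iff.2 inferInstance, measure_empty] at h1
    exact zero_ne_one h1
  haveI hHne : Nonempty H := by
    obtain ⟨x⟩ := hXne
    exact ⟨⟨A 1 (fun _ => (x, 0)), hAH 1 le_rfl _⟩⟩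
  have hcm : ∀ h : H, Measurable h.1 := fun h => (hH h.1 h.2).1
  have hcr : ∀ h : H, ∀ x, h.1 x ∈ Set.Icc 1 (K + 1) := fun h => (hH h.1 h.2).2
  have hIn0 : ∀ h : H, 0 ≤ riskIn ℓ D h.1 := fun h =>
    (riskIn_props hl_nonneg hB D (hcm h) (hcr h)).2.1
  have hInB : ∀ h : H, riskIn ℓ D h.1 ≤ B := fun h =>
    (riskIn_props hl_nonneg hB D (hcm h) (hcr h)).2.2
  have hQn0 : ∀ (j) (h : H), 0 ≤ riskQ ℓ K (Q j) h.1 := fun j h =>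
    (riskQ_props hl_nonneg hB (hQ j) (hcm h) (hcr h)).2.2.1
  have hQnB : ∀ (j) (h : H), riskQ ℓ K (Q j) h.1 ≤ B := fun j h =>
    (riskQ_props hl_nonneg hB (hQ j) (hcm h) (hcr h)).2.2.2
  have bddIn : BddBelow (Set.range fun h : H => riskIn ℓ D h.1) :=
    ⟨0, by rintro x ⟨h, rfl⟩; exact hIn0 h⟩
  have bddQ : ∀ j, BddBelow (Set.range fun h : H => riskQ ℓ K (Q j) h.1) :=
    fun j => ⟨0, by rintro x ⟨h, rfl⟩; exact hQn0 j h⟩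
  have hgB : ∀ (b : Fin l → ℝ), (∀ j, 0 ≤ b j) → (∑ j, b j) ≤ 1 → ∀ h : H,
      0 ≤ (1 - ∑ j, b j) * riskIn ℓ D h.1 + ∑ j, b j * riskQ ℓ K (Q j) h.1 ∧
      (1 - ∑ j, b j) * riskIn ℓ D h.1 + ∑ j, b j * riskQ ℓ K (Q j) h.1 ≤ B := by
    intro b hb0 hb1 h
    constructor
    · exact add_nonneg (mul_nonneg (by linarith) (hIn0 h))
        (Finset.sum_nonneg fun j _ => mul_nonneg (hb0 j) (hQn0 j h))
    · calc (1 - ∑ j, b j) * riskIn ℓ D h.1 + ∑ j, b j * riskQ ℓ K (Q j) h.1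
          ≤ (1 - ∑ j, b j) * B + ∑ j, b j * B :=
            add_le_add (mul_le_mul_of_nonneg_left (hInB h) (by linarith))
              (Finset.sum_le_sum fun j _ => mul_le_mul_of_nonneg_left (hQnB j h) (hb0 j))
        _ = B := by rw [← Finset.sum_mul]; ring
  have hf0 : fDQ ℓ D H Q 0 = ⨅ h : H, riskIn ℓ D h.1 := by
    unfold fDQ; exact iInf_congr fun h => by simp
  have hfe : ∀ j, fDQ ℓ D H Q (Pi.single j 1) = ⨅ h : H, riskQ ℓ K (Q j) h.1 := by
    intro j
    unfold fDQ
    refine iInf_congr fun h => ?_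
    rw [sum_single_mul, Finset.sum_pi_single']
    simp
  haveI := D.probI
  haveI hPn : ∀ n, IsProbabilityMeasure (sampleMeasure D n) := fun n => by
    show IsProbabilityMeasure (Measure.pi fun _ => D.DI); infer_instance
  -- key expectation estimate
  have keyE : ∀ (n), 1 ≤ n → ∀ b ∈ simplexO l,
      Measurable (fun S : Fin n → 𝒳 × ℕ =>
        (1 - ∑ j, b j) * riskIn ℓ D (A n S) + ∑ j, b j * riskQ ℓ K (Q j) (A n S)) ∧
      ∫ S, ((1 - ∑ j, b j) * riskIn ℓ D (A n S)
          + ∑ j, b j * riskQ ℓ K (Q j) (A n S)) ∂(sampleMeasure D n)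
        ≤ fDQ ℓ D H Q b + ε n := by
    intro n hn b hb
    obtain ⟨D', hD', hDI, hprior, hQdec⟩ := hconv b hb
    have hriskIn : ∀ h : 𝒳 → ℕ, riskIn ℓ D' h = riskIn ℓ D h := fun h => by
      unfold riskIn; rw [hDI]
    have hrisk : ∀ h : H, risk ℓ D' h.1
        = (1 - ∑ j, b j) * riskIn ℓ D h.1 + ∑ j, b j * riskQ ℓ K (Q j) h.1 := by
      intro h
      rw [risk_eq_sum hl_nonneg hB D' hQ hb.1 hQdec (hcm h) (hcr h), hprior, hriskIn]
    have hASH : ∀ S : Fin n → 𝒳 × ℕ, A n S ∈ H := hAH n hn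
    have hfun : (fun S : Fin n → 𝒳 × ℕ => risk ℓ D' (A n S))
        = fun S => (1 - ∑ j, b j) * riskIn ℓ D (A n S)
            + ∑ j, b j * riskQ ℓ K (Q j) (A n S) :=
      funext fun S => hrisk ⟨A n S, hASH S⟩
    have hmeas := hAmeas D' hD' n hn
    rw [hfun] at hmeas
    refine ⟨hmeas, ?_⟩
    have hsm : sampleMeasure D' n = sampleMeasure D n := by
      show Measure.pi (fun _ => D'.DI) = Measure.pi fun _ => D.DI
      rw [hDI]
    have hinf : (⨅ h : H, risk ℓ D' h.1) = fDQ ℓ D H Q b := by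
      unfold fDQ; exact iInf_congr fun h => hrisk h
    have hbd := hAbound D' hD' n hn
    rw [hsm, hinf] at hbd
    have hint : Integrable (fun S : Fin n → 𝒳 × ℕ => risk ℓ D' (A n S)) (sampleMeasure D n) := by
      rw [hfun]
      refine (integrable_const B).mono' hmeas.aestronglyMeasurable
        (Filter.Eventually.of_forall fun S => ?_)
      rw [Real.norm_eq_abs, abs_of_nonneg (hgB b hb.1 hb.2.le ⟨A n S, hASH S⟩).1]
      exact (hgB b hb.1 hb.2.le ⟨A n S, hASH S⟩).2
    rw [integral_sub hint (integrable_const _), integral_const] at hbd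
    simp only [probReal_univ, measure_univ, ENNReal.toReal_one, one_smul] at hbd
    rw [hfun] at hbd
    linarith
  -- rewrite the goal
  have hrhs : (1 - ∑ j, a j) * fDQ ℓ D H Q 0 + ∑ j, a j * fDQ ℓ D H Q (Pi.single j 1)
      = (1 - ∑ j, a j) * (⨅ h : H, riskIn ℓ D h.1)
        + ∑ j, a j * ⨅ h : H, riskQ ℓ K (Q j) h.1 := by
    rw [hf0]; congr 1; exact Finset.sum_congr rfl fun j _ => by rw [hfe j]
  rw [hrhs]
  refine le_antisymm ?_ ?_
  · -- upper bound via learnability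
    refine le_of_forall_pos_le_add fun δ hδ => ?_
    have hB1 : (0:ℝ) < B + 1 := by linarith
    have hη0 : 0 < min (1/2 : ℝ) (δ / (6 * (B + 1))) := lt_min (by norm_num) (by positivity)
    set η : ℝ := min (1/2) (δ / (6 * (B + 1))) with hη_def
    have hη2 : η ≤ 1/2 := min_le_left _ _
    have hηB : η * B ≤ δ / 6 := by
      have h1 : η ≤ δ / (6 * (B + 1)) := min_le_right _ _
      calc η * B ≤ (δ / (6 * (B + 1))) * B := mul_le_mul_of_nonneg_right h1 hB0
        _ ≤ δ / 6 := by
            rw [div_mul_eq_mul_div, div_le_div_iff₀ (by positivity) (by norm_num)]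
            nlinarith
    obtain ⟨n, hεn, hn1⟩ := ((htend.eventually (gt_mem_nhds (by positivity : (0:ℝ) < δ/6))).and
      (Filter.eventually_ge_atTop 1)).exists
    have h0mem : (0 : Fin l → ℝ) ∈ simplexO l := by simp [simplexO]
    have hASH : ∀ S : Fin n → 𝒳 × ℕ, A n S ∈ H := hAH n hn1
    have hJ01 : ∀ S : Fin n → 𝒳 × ℕ,
        0 ≤ riskIn ℓ D (A n S) ∧ riskIn ℓ D (A n S) ≤ B := fun S =>
      (riskIn_props hl_nonneg hB D (hcm ⟨_, hASH S⟩) (hcr ⟨_, hASH S⟩)).2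
    have hR01 : ∀ (j) (S : Fin n → 𝒳 × ℕ),
        0 ≤ riskQ ℓ K (Q j) (A n S) ∧ riskQ ℓ K (Q j) (A n S) ≤ B := fun j S =>
      (riskQ_props hl_nonneg hB (hQ j) (hcm ⟨_, hASH S⟩) (hcr ⟨_, hASH S⟩)).2.2
    -- measurability of components
    have hmJ : Measurable fun S : Fin n → 𝒳 × ℕ => riskIn ℓ D (A n S) := by
      have := (keyE n hn1 0 h0mem).1; simpa using this
    have hmR : ∀ j, Measurable fun S : Fin n → 𝒳 × ℕ => riskQ ℓ K (Q j) (A n S) := by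
      intro j
      have hm2 := (keyE n hn1 (Pi.single j (1/2))
        (single_mem_simplexO j (by norm_num) (by norm_num))).1
      have heq : (fun S : Fin n → 𝒳 × ℕ => riskQ ℓ K (Q j) (A n S))
          = fun S => 2 * ((1 - ∑ k, (Pi.single j (1/2:ℝ) : Fin l → ℝ) k) * riskIn ℓ D (A n S)
              + ∑ k, (Pi.single j (1/2:ℝ) : Fin l → ℝ) k * riskQ ℓ K (Q k) (A n S))
            - riskIn ℓ D (A n S) := by
        funext S
        rw [sum_single_mul, Finset.sum_pi_single']
        simp only [Finset.mem_univ, if_true]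
        ring
      rw [heq]
      exact (measurable_const.mul hm2).sub hmJ
    have hintJ : Integrable (fun S : Fin n → 𝒳 × ℕ => riskIn ℓ D (A n S))
        (sampleMeasure D n) := by
      refine (integrable_const B).mono' hmJ.aestronglyMeasurable
        (Filter.Eventually.of_forall fun S => ?_)
      rw [Real.norm_eq_abs, abs_of_nonneg (hJ01 S).1]; exact (hJ01 S).2
    have hintR : ∀ j, Integrable (fun S : Fin n → 𝒳 × ℕ => riskQ ℓ K (Q j) (A n S))
        (sampleMeasure D n) := by
      intro j
      refine (integrable_const B).mono' (hmR j).aestronglyMeasurable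
        (Filter.Eventually.of_forall fun S => ?_)
      rw [Real.norm_eq_abs, abs_of_nonneg (hR01 j S).1]; exact (hR01 j S).2
    have hEJnn : (0:ℝ) ≤ ∫ S, riskIn ℓ D (A n S) ∂(sampleMeasure D n) :=
      integral_nonneg fun S => (hJ01 S).1
    -- bound on E[riskIn]
    have hEJ : ∫ S, riskIn ℓ D (A n S) ∂(sampleMeasure D n)
        ≤ (⨅ h : H, riskIn ℓ D h.1) + ε n := by
      have := (keyE n hn1 0 h0mem).2
      rw [hf0] at this
      simpa using this
    -- bound on E[riskQ j]
    have hER : ∀ (j) (β : ℝ), 1/2 ≤ β → β < 1 →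
        ∫ S, riskQ ℓ K (Q j) (A n S) ∂(sampleMeasure D n)
          ≤ (⨅ h : H, riskQ ℓ K (Q j) h.1) + ((1 - β) * B + ε n) / β := by
      intro j β hβh hβ1
      have hβ0 : (0:ℝ) < β := by linarith
      have hkey := (keyE n hn1 (Pi.single j β)
        (single_mem_simplexO j (by linarith) hβ1)).2
      simp only [sum_single_mul, Finset.sum_pi_single', Finset.mem_univ, if_true] at hkey
      have hfU : fDQ ℓ D H Q (Pi.single j β) ≤ (1 - β) * B + β * ⨅ h : H, riskQ ℓ K (Q j) h.1 := by
        have h1 : ∀ h : H, (fDQ ℓ D H Q (Pi.single j β) - (1 - β) * B) / β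
            ≤ riskQ ℓ K (Q j) h.1 := by
          intro h
          rw [div_le_iff₀ hβ0]
          have h2 : fDQ ℓ D H Q (Pi.single j β)
              ≤ (1 - ∑ k, (Pi.single j β : Fin l → ℝ) k) * riskIn ℓ D h.1
                + ∑ k, (Pi.single j β : Fin l → ℝ) k * riskQ ℓ K (Q k) h.1 := by
            unfold fDQ
            have hbdd : BddBelow (Set.range fun h' : H =>
                (1 - ∑ k, (Pi.single j β : Fin l → ℝ) k) * riskIn ℓ D h'.1
                  + ∑ k, (Pi.single j β : Fin l → ℝ) k * riskQ ℓ K (Q k) h'.1) := by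
              refine ⟨0, ?_⟩
              rintro x ⟨h', rfl⟩
              exact (hgB _ (single_mem_simplexO j (by linarith) hβ1).1
                (single_mem_simplexO j (by linarith) hβ1).2.le h').1
            exact ciInf_le hbdd h
          rw [sum_single_mul, Finset.sum_pi_single'] at h2
          simp only [Finset.mem_univ, if_true] at h2
          nlinarith [hIn0 h, hInB h]
        have h3 := le_ciInf h1
        rw [div_le_iff₀ hβ0] at h3
        nlinarith [h3]
      rw [integral_add (hintJ.const_mul _) ((hintR j).const_mul _),
        integral_const_mul, integral_const_mul] at hkey
      have h6 : β * ∫ S, riskQ ℓ K (Q j) (A n S) ∂(sampleMeasure D n)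
          ≤ (1 - β) * B + β * (⨅ h : H, riskQ ℓ K (Q j) h.1) + ε n := by
        nlinarith [mul_nonneg (by linarith : (0:ℝ) ≤ 1 - β) hEJnn]
      have h7 : (∫ S, riskQ ℓ K (Q j) (A n S) ∂(sampleMeasure D n)
          - ⨅ h : H, riskQ ℓ K (Q j) h.1) ≤ ((1 - β) * B + ε n) / β := by
        rw [le_div_iff₀ hβ0]
        nlinarith [h6]
      linarith
    -- assemble
    have hintSum : Integrable (fun S : Fin n → 𝒳 × ℕ =>
        ∑ j, a j * riskQ ℓ K (Q j) (A n S)) (sampleMeasure D n) :=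
      integrable_finset_sum _ fun j _ => (hintR j).const_mul _
    have hle1 : fDQ ℓ D H Q a ≤ ∫ S, ((1 - ∑ j, a j) * riskIn ℓ D (A n S)
        + ∑ j, a j * riskQ ℓ K (Q j) (A n S)) ∂(sampleMeasure D n) := by
      have h8 : ∀ S : Fin n → 𝒳 × ℕ, fDQ ℓ D H Q a
          ≤ (1 - ∑ j, a j) * riskIn ℓ D (A n S)
            + ∑ j, a j * riskQ ℓ K (Q j) (A n S) := fun S => by
        unfold fDQ
        have hbdd : BddBelow (Set.range fun h' : H =>
            (1 - ∑ j, a j) * riskIn ℓ D h'.1 + ∑ j, a j * riskQ ℓ K (Q j) h'.1) := by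
          refine ⟨0, ?_⟩
          rintro x ⟨h', rfl⟩
          exact (hgB a ha.1 ha.2.le h').1
        exact ciInf_le hbdd ⟨A n S, hASH S⟩
      calc fDQ ℓ D H Q a = ∫ _S, fDQ ℓ D H Q a ∂(sampleMeasure D n) := by simp
        _ ≤ _ := integral_mono (integrable_const _) ((hintJ.const_mul _).add hintSum) h8
    have hle2 : ∫ S, ((1 - ∑ j, a j) * riskIn ℓ D (A n S)
        + ∑ j, a j * riskQ ℓ K (Q j) (A n S)) ∂(sampleMeasure D n)
        = (1 - ∑ j, a j) * (∫ S, riskIn ℓ D (A n S) ∂(sampleMeasure D n))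
          + ∑ j, a j * ∫ S, riskQ ℓ K (Q j) (A n S) ∂(sampleMeasure D n) := by
      rw [integral_add (hintJ.const_mul _) hintSum, integral_const_mul,
        integral_finset_sum _ fun j _ => (hintR j).const_mul _]
      congr 1
      exact Finset.sum_congr rfl fun j _ => integral_const_mul _ _
    -- final arithmetic
    have hc := fun j => hER j (1 - η) (by linarith) (by linarith)
    have hcnn : 0 ≤ ((1 - (1 - η)) * B + ε n) / (1 - η) :=
      div_nonneg (by nlinarith [hε0 n, hη0.le]) (by linarith)
    have hcle : ((1 - (1 - η)) * B + ε n) / (1 - η) ≤ 2 * (δ/6 + δ/6) := by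
      rw [div_le_iff₀ (by linarith : (0:ℝ) < 1 - η)]
      nlinarith [hηB, hεn.le, hη2, hδ.le]
    have hsum1 : ∑ j, a j * (∫ S, riskQ ℓ K (Q j) (A n S) ∂(sampleMeasure D n))
        ≤ ∑ j, a j * ((⨅ h : H, riskQ ℓ K (Q j) h.1) + ((1 - (1 - η)) * B + ε n) / (1 - η)) :=
      Finset.sum_le_sum fun j _ => mul_le_mul_of_nonneg_left (hc j) (ha.1 j)
    have hsum2 : ∑ j, a j * ((⨅ h : H, riskQ ℓ K (Q j) h.1) + ((1 - (1 - η)) * B + ε n) / (1 - η))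
        = (∑ j, a j * ⨅ h : H, riskQ ℓ K (Q j) h.1)
          + (∑ j, a j) * (((1 - (1 - η)) * B + ε n) / (1 - η)) := by
      rw [Finset.sum_mul, ← Finset.sum_add_distrib]
      exact Finset.sum_congr rfl fun j _ => by ring
    have hsnn : (0:ℝ) ≤ ∑ j, a j := Finset.sum_nonneg fun j _ => ha.1 j
    have hs1 : (∑ j, a j) < 1 := ha.2
    have hfinal : (1 - ∑ j, a j) * (∫ S, riskIn ℓ D (A n S) ∂(sampleMeasure D n))
          + ∑ j, a j * ∫ S, riskQ ℓ K (Q j) (A n S) ∂(sampleMeasure D n)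
        ≤ (1 - ∑ j, a j) * (⨅ h : H, riskIn ℓ D h.1)
          + (∑ j, a j * ⨅ h : H, riskQ ℓ K (Q j) h.1) + δ := by
      have hA1 : (1 - ∑ j, a j) * (∫ S, riskIn ℓ D (A n S) ∂(sampleMeasure D n))
          ≤ (1 - ∑ j, a j) * ((⨅ h : H, riskIn ℓ D h.1) + ε n) :=
        mul_le_mul_of_nonneg_left hEJ (by linarith)
      have hA2 := le_trans hsum1 (le_of_eq hsum2)
      set c := ((1 - (1 - η)) * B + ε n) / (1 - η)
      have hA3 : (∑ j, a j) * c ≤ c := by nlinarith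
      have hA4 : (1 - ∑ j, a j) * ε n ≤ ε n := by nlinarith [hε0 n]
      nlinarith [hεn.le, hcle]
    calc fDQ ℓ D H Q a ≤ _ := hle1
      _ = _ := hle2
      _ ≤ _ := hfinal
  · -- lower bound: pointwise
    unfold fDQ
    refine le_ciInf fun h => add_le_add
      (mul_le_mul_of_nonneg_left (ciInf_le bddIn h) (by linarith [ha.2]))
      (Finset.sum_le_sum fun j _ => mul_le_mul_of_nonneg_left (ciInf_le (bddQ j) h) (ha.1 j))

end Helpers

/-- Lemmas 1 and 2 of the paper.  If OOD detection is learnable under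
risk in a prior-unknown space `𝒟` for `H`, then (i) the linear condition under risk holds,
and (ii) the multi-linear condition holds for every OOD convex domain in `𝒟` corresponding
to an OOD convex decomposition `Q₁,…,Q_l`. -/
theorem stmt2 {d K : ℕ} (X : Set (EuclideanSpace ℝ (Fin d)))
    (ℓ : ℕ → ℕ → ℝ)
    (hl_nonneg : ∀ y₁ y₂, 0 ≤ ℓ y₁ y₂)
    (hl_zero : ∀ y₁ ∈ Set.Icc 1 (K + 1), ∀ y₂ ∈ Set.Icc 1 (K + 1), (ℓ y₁ y₂ = 0 ↔ y₁ = y₂))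
    (hl_bdd : ∃ B, ∀ y₁ ∈ Set.Icc 1 (K + 1), ∀ y₂ ∈ Set.Icc 1 (K + 1), ℓ y₁ y₂ ≤ B)
    (H : Set (↥X → ℕ)) (hH : ∀ h ∈ H, Measurable h ∧ ∀ x, h x ∈ Set.Icc 1 (K + 1))
    (𝒟 : Set (Domain ↥X K)) (hPU : PriorUnknown 𝒟)
    (hLearn : LearnableRisk ℓ 𝒟 H) :
    (∀ D ∈ 𝒟, ∀ α ∈ Set.Ico (0 : ℝ) 1,
        (⨅ h : H, riskA ℓ D h.1 α)
          = (1 - α) * (⨅ h : H, riskIn ℓ D h.1) + α * (⨅ h : H, riskOut ℓ D h.1)) ∧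
    (∀ (l : ℕ) (Q : Fin l → Measure (↥X × ℕ)), (∀ j, IsOODDistr K (Q j)) →
      ∀ D ∈ 𝒟,
        (∃ lam ∈ simplexO l, D.prior = ∑ j, lam j ∧
          ENNReal.ofReal D.prior • D.DO = ∑ j, ENNReal.ofReal (lam j) • Q j) →
        (∀ a ∈ simplexO l, ∃ D' ∈ 𝒟, D'.DI = D.DI ∧ D'.prior = ∑ j, a j ∧
          ENNReal.ofReal D'.prior • D'.DO = ∑ j, ENNReal.ofReal (a j) • Q j) →
        ∀ a ∈ simplexO l,
          fDQ ℓ D H Q a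
            = (1 - ∑ j, a j) * fDQ ℓ D H Q 0
              + ∑ j, a j * fDQ ℓ D H Q (Pi.single j 1)) := by
  obtain ⟨B, hB⟩ := hl_bdd
  have h1mem : (1:ℕ) ∈ Set.Icc 1 (K+1) := ⟨le_refl 1, Nat.succ_le_succ (Nat.zero_le K)⟩
  have hB0 : (0:ℝ) ≤ B := by
    have h1 := hB 1 h1mem 1 h1mem
    have h0 : ℓ 1 1 = 0 := (hl_zero 1 h1mem 1 h1mem).2 rfl
    linarith
  constructor
  · -- linear condition under risk
    intro D hD α hα
    have hQ1 : ∀ j : Fin 1, IsOODDistr K ((fun _ => D.DO) j) := fun _ => ⟨D.probO, D.suppO⟩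
    have hconv : ∀ b ∈ simplexO 1, ∃ D' ∈ 𝒟, D'.DI = D.DI ∧ D'.prior = ∑ j, b j ∧
        ENNReal.ofReal D'.prior • D'.DO = ∑ j : Fin 1, ENNReal.ofReal (b j) • D.DO := by
      intro b hb
      have hbm : (∑ j, b j) ∈ Set.Ico (0:ℝ) 1 := ⟨Finset.sum_nonneg fun j _ => hb.1 j, hb.2⟩
      refine ⟨D.withPrior ⟨∑ j, b j, hbm⟩, hPU D hD _, rfl, rfl, ?_⟩
      show ENNReal.ofReal (∑ j, b j) • D.DO = _
      rw [Fin.sum_univ_one, Fin.sum_univ_one]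
    have hmem : (fun _ : Fin 1 => α) ∈ simplexO 1 :=
      ⟨fun _ => hα.1, by rw [Fin.sum_univ_one]; exact hα.2⟩
    have hmaster := master hl_nonneg hB0 hB H hH 𝒟 hLearn (fun _ => D.DO) hQ1 D hconv
      (fun _ => α) hmem
    have hL : (⨅ h : H, riskA ℓ D h.1 α) = fDQ ℓ D H (fun _ => D.DO) (fun _ : Fin 1 => α) := by
      unfold fDQ riskA
      exact iInf_congr fun h => by simp only [Fin.sum_univ_one]; rfl
    have hf0eq : fDQ ℓ D H (fun _ : Fin 1 => D.DO) (0 : Fin 1 → ℝ) = ⨅ h : H, riskIn ℓ D h.1 := by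
      unfold fDQ
      exact iInf_congr fun h => by simp
    have hfe0 : fDQ ℓ D H (fun _ : Fin 1 => D.DO) (Pi.single (0 : Fin 1) (1:ℝ)) = ⨅ h : H, riskOut ℓ D h.1 := by
      unfold fDQ
      refine iInf_congr fun h => ?_
      simp only [Fin.sum_univ_one, Pi.single_eq_same, sub_self, zero_mul, one_mul, zero_add]
      rfl
    rw [hL, hmaster]
    simp only [Fin.sum_univ_one] at hmaster ⊢
    rw [hf0eq, hfe0]
  · -- multi-linear condition
    intro l Q hQ D hD _hdec hconv a ha
    exact master hl_nonneg hB0 hB H hH 𝒟 hLearn Q hQ D hconv a ha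

end OODF

end
end
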